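/- Let U, V be linear subspaces of a finite-dimensional real Hilbert space X. Then P_{U+V} = Id − 2(Id − P_U)(2·Id − P_U − P_V)^†(Id − P_V). -/

import Mathlib

/-- `B` is the Moore–Penrose (pseudo)inverse of `A`, characterized by the four Penrose
conditions. -/
def IsMoorePenroseInverse {X Y : Type*} [NormedAddCommGroup X] [InnerProductSpace ℝ X]
    [CompleteSpace X] [NormedAddCommGroup Y] [InnerProductSpace ℝ Y] [CompleteSpace Y]
    (A : X →L[ℝ] Y) (B : Y →L[ℝ] X) : Prop :=
  A ∘L B ∘L A = A ∧ B ∘L A ∘L B = B ∧ IsSelfAdjoint (A ∘L B) ∧ IsSelfAdjoint (B ∘L A)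

/-- The orthogonal projection onto a subspace, as an operator `X → X`. -/
noncomputable def proj {X : Type*} [NormedAddCommGroup X] [InnerProductSpace ℝ X]
    (U : Submodule ℝ X) [U.HasOrthogonalProjection] : X →L[ℝ] X :=
  U.subtypeL ∘L U.orthogonalProjectionOnto

open scoped RealInnerProductSpace

section Aux

/-- Uniqueness of Moore-Penrose inverses, in star-monoid form. -/
theorem mp_unique_mul {M : Type*} [Monoid M] [StarMul M] {a b c : M}
    (h1 : a * b * a = a) (h2 : b * a * b = b)
    (h3 : star (a * b) = a * b) (h4 : star (b * a) = b * a)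
    (h1c : a * c * a = a) (h2c : c * a * c = c)
    (h3c : star (a * c) = a * c) (h4c : star (c * a) = c * a) : b = c := by
  have hab : a * b = a * c := by
    calc a * b = star (a * b) := h3.symm
      _ = star b * star a := star_mul a b
      _ = star b * star (a * c * a) := by rw [h1c]
      _ = star b * (star a * star (a * c)) := by rw [star_mul (a * c) a]
      _ = (star b * star a) * star (a * c) := by rw [mul_assoc]
      _ = star (a * b) * star (a * c) := by rw [star_mul a b]
      _ = (a * b) * (a * c) := by rw [h3, h3c]
      _ = ((a * b) * a) * c := (mul_assoc (a * b) a c).symm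
      _ = a * c := by rw [h1]
  have hba : b * a = c * a := by
    calc b * a = star (b * a) := h4.symm
      _ = star a * star b := star_mul b a
      _ = star (a * (c * a)) * star b := by rw [← mul_assoc, h1c]
      _ = (star (c * a) * star a) * star b := by rw [star_mul a (c * a)]
      _ = star (c * a) * (star a * star b) := by rw [mul_assoc]
      _ = star (c * a) * star (b * a) := by rw [star_mul b a]
      _ = (c * a) * (b * a) := by rw [h4, h4c]
      _ = c * (a * b * a) := by rw [mul_assoc, mul_assoc]
      _ = c * a := by rw [h1]
  calc b = b * a * b := h2.symm
    _ = (c * a) * b := by rw [hba]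
    _ = c * (a * b) := mul_assoc _ _ _
    _ = c * (a * c) := by rw [hab]
    _ = c * a * c := (mul_assoc _ _ _).symm
    _ = c := h2c

/-- If a Penrose inverse of a self-adjoint element exists, it is self-adjoint. -/
theorem mp_star_eq {M : Type*} [Monoid M] [StarMul M] {a b : M} (ha : star a = a)
    (h1 : a * b * a = a) (h2 : b * a * b = b)
    (h3 : star (a * b) = a * b) (h4 : star (b * a) = b * a) : star b = b := by
  have key : a * star b = b * a := by
    calc a * star b = star a * star b := by rw [ha]
      _ = star (b * a) := (star_mul b a).symm
      _ = b * a := h4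
  have key2 : star b * a = a * b := by
    calc star b * a = star b * star a := by rw [ha]
      _ = star (a * b) := (star_mul a b).symm
      _ = a * b := h3
  have h1c : a * star b * a = a := by
    calc a * star b * a = star a * star b * star a := by rw [ha]
      _ = star (a * b * a) := by simp only [star_mul, mul_assoc]
      _ = star a := by rw [h1]
      _ = a := ha
  have h2c : star b * a * star b = star b := by
    calc star b * a * star b = star b * star a * star b := by rw [ha]
      _ = star (b * a * b) := by simp only [star_mul, mul_assoc]
      _ = star b := by rw [h2]
  have h3c : star (a * star b) = a * star b := by rw [key]; exact h4
  have h4c : star (star b * a) = star b * a := by rw [key2]; exact h3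
  exact (mp_unique_mul h1 h2 h3 h4 h1c h2c h3c h4c).symm

variable {X : Type*} [NormedAddCommGroup X] [InnerProductSpace ℝ X] [FiniteDimensional ℝ X]

open ContinuousLinearMap in
/-- A self-adjoint idempotent operator fixes every vector orthogonal to its kernel. -/
theorem fix_of_perp_ker (R : X →L[ℝ] X) (hsa : IsSelfAdjoint R) (hid : R * R = R)
    (x : X) (hx : ∀ y, R y = 0 → ⟪x, y⟫ = 0) : R x = x := by
  have h0 : R (x - R x) = 0 := by
    have := congrArg (fun T : X →L[ℝ] X => T x) hid
    simp only [ContinuousLinearMap.mul_apply] at this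
    rw [map_sub, this, sub_self]
  have h1 : ⟪x - R x, x⟫ = 0 := by rw [real_inner_comm]; exact hx _ h0
  have h2 : ⟪x - R x, R x⟫ = 0 := by
    have h3 := ContinuousLinearMap.adjoint_inner_right R (x - R x) x
    rw [hsa.adjoint_eq] at h3
    rw [h3, h0, inner_zero_left]
  have : ⟪x - R x, x - R x⟫ = 0 := by
    rw [inner_sub_right, h1, h2, sub_zero]
  have := inner_self_eq_zero.mp this
  rw [sub_eq_zero] at this
  exact this.symm

theorem proj_apply_of_mem {U : Submodule ℝ X} [U.HasOrthogonalProjection] {x : X}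
    (hx : x ∈ U) : proj U x = x := Submodule.starProjection_eq_self_iff.mpr hx

theorem proj_apply_of_mem_orthogonal {U : Submodule ℝ X} [U.HasOrthogonalProjection] {x : X}
    (hx : x ∈ Uᗮ) : proj U x = 0 := by
  have : U.orthogonalProjectionOnto x = 0 := Submodule.orthogonalProjectionOnto_eq_zero_iff.mpr hx
  simp [proj, this]

theorem proj_apply_mem (U : Submodule ℝ X) [U.HasOrthogonalProjection] (x : X) :
    proj U x ∈ U := (U.orthogonalProjectionOnto x).2

theorem proj_isSelfAdjoint (U : Submodule ℝ X) [U.HasOrthogonalProjection] :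
    IsSelfAdjoint (proj U) := isSelfAdjoint_starProjection U

theorem id_sub_proj (U : Submodule ℝ X) [U.HasOrthogonalProjection] :
    ContinuousLinearMap.id ℝ X - proj U = proj Uᗮ := by
  ext x
  have := U.starProjection_add_starProjection_orthogonal x
  simp only [ContinuousLinearMap.coe_sub', Pi.sub_apply, ContinuousLinearMap.coe_id', id_eq]
  show x - proj U x = proj Uᗮ x
  exact sub_eq_of_eq_add' this.symm

theorem proj_congr {S T : Submodule ℝ X} (h : S = T) : proj S = proj T := by
  subst h; rfl

theorem proj_coe (U : Submodule ℝ X) (x : X) :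
    proj U x = (U.orthogonalProjectionOnto x : X) := rfl

theorem inner_proj_self (U : Submodule ℝ X) (y : X) : ⟪proj U y, y⟫ = ‖proj U y‖ ^ 2 := by
  have h : ⟪proj U y, y - proj U y⟫ = 0 :=
    Submodule.inner_right_of_mem_orthogonal (proj_apply_mem U y)
      (Submodule.sub_starProjection_mem_orthogonal (K := U) y)
  calc ⟪proj U y, y⟫ = ⟪proj U y, proj U y + (y - proj U y)⟫ := by rw [add_sub_cancel]
    _ = ⟪proj U y, proj U y⟫ + ⟪proj U y, y - proj U y⟫ := inner_add_right _ _ _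
    _ = ‖proj U y‖ ^ 2 := by rw [h, add_zero, real_inner_self_eq_norm_sq]

end Aux

/-- for linear subspaces `U, V` of a finite-dimensional real Hilbert space,
`P_{U+V} = Id − 2(Id − P_U)(2·Id − P_U − P_V)^†(Id − P_V)`. -/
theorem stmt3 {X : Type*} [NormedAddCommGroup X] [InnerProductSpace ℝ X]
    [FiniteDimensional ℝ X] (U V : Submodule ℝ X) (B : X →L[ℝ] X)
    (hB : IsMoorePenroseInverse
      ((2 : ℝ) • ContinuousLinearMap.id ℝ X - proj U - proj V) B) :
    proj (U ⊔ V) = ContinuousLinearMap.id ℝ X -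
      (2 : ℝ) • ((ContinuousLinearMap.id ℝ X - proj U) ∘L B ∘L
        (ContinuousLinearMap.id ℝ X - proj V)) := by
  classical
  obtain ⟨h1', h2', h3', h4'⟩ := hB
  set A : X →L[ℝ] X := (2 : ℝ) • ContinuousLinearMap.id ℝ X - proj U - proj V with hAdef
  set P : X →L[ℝ] X := proj Uᗮ with hPdef
  set Q : X →L[ℝ] X := proj Vᗮ with hQdef
  set W : Submodule ℝ X := Uᗮ ⊓ Vᗮ with hWdef
  have h1 : A * B * A = A := by rw [mul_assoc]; exact h1'
  have h2 : B * A * B = B := by rw [mul_assoc]; exact h2'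
  have h3 : star (A * B) = A * B := h3'.star_eq
  have h4 : star (B * A) = B * A := h4'.star_eq
  have hAsa : star A = A := by
    have : IsSelfAdjoint A := by
      refine ((IsSelfAdjoint.smul (star_trivial (2:ℝ)) ?_).sub
        (proj_isSelfAdjoint U)).sub (proj_isSelfAdjoint V)
      exact IsSelfAdjoint.one (R := X →L[ℝ] X)
    exact this.star_eq
  have hBsa : star B = B := mp_star_eq hAsa h1 h2 h3 h4
  have hA : A = P + Q := by
    rw [hPdef, hQdef, ← id_sub_proj U, ← id_sub_proj V, hAdef]
    module
  have hQeq : Q = A - P := by rw [hA]; abel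
  -- kernel of A
  have hkerA : ∀ y, A y = 0 → y ∈ U ∧ y ∈ V := by
    intro y hy
    have hy' : P y + Q y = 0 := by
      have := congrArg (fun T : X →L[ℝ] X => T y) hA
      simpa [ContinuousLinearMap.add_apply, hy] using this.symm
    have hinner : ‖P y‖ ^ 2 + ‖Q y‖ ^ 2 = 0 := by
      have : ⟪P y, y⟫ + ⟪Q y, y⟫ = 0 := by
        rw [← inner_add_left, hy', inner_zero_left]
      rwa [hPdef, hQdef, inner_proj_self, inner_proj_self] at this
    have hP0 : P y = 0 := by
      have h' : ‖P y‖ ^ 2 = 0 := by nlinarith [sq_nonneg ‖P y‖, sq_nonneg ‖Q y‖]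
      exact norm_eq_zero.mp (pow_eq_zero_iff (two_ne_zero) |>.mp h')
    have hQ0 : Q y = 0 := by
      have h' : ‖Q y‖ ^ 2 = 0 := by nlinarith [sq_nonneg ‖P y‖, sq_nonneg ‖Q y‖]
      exact norm_eq_zero.mp (pow_eq_zero_iff (two_ne_zero) |>.mp h')
    constructor
    · have h'' : (Uᗮ.orthogonalProjectionOnto y : X) = 0 := hP0
      have := Submodule.orthogonalProjectionOnto_eq_zero_iff.mp (Submodule.coe_eq_zero.mp h'')
      rwa [Submodule.orthogonal_orthogonal] at this
    · have h'' : (Vᗮ.orthogonalProjectionOnto y : X) = 0 := hQ0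
      have := Submodule.orthogonalProjectionOnto_eq_zero_iff.mp (Submodule.coe_eq_zero.mp h'')
      rwa [Submodule.orthogonal_orthogonal] at this
  -- kernel of R = B * A
  have hkerR : ∀ y, (B * A) y = 0 → y ∈ U ∧ y ∈ V := by
    intro y hy
    apply hkerA
    have := congrArg (fun T : X →L[ℝ] X => T y) h1
    simp only [ContinuousLinearMap.mul_apply] at this hy
    rw [hy, map_zero] at this
    exact this.symm
  have hRidem : (B * A) * (B * A) = B * A := by
    rw [mul_assoc B A (B * A), ← mul_assoc A B A, h1]
  have hRfix : ∀ x : X, (x ∈ Uᗮ ∨ x ∈ Vᗮ) → (B * A) x = x := by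
    intro x hx
    apply fix_of_perp_ker _ h4' hRidem
    intro y hy
    obtain ⟨hyU, hyV⟩ := hkerR y hy
    rcases hx with hx | hx
    · exact Submodule.inner_left_of_mem_orthogonal hyU hx
    · exact Submodule.inner_left_of_mem_orthogonal hyV hx
  have hRP : (B * A) * P = P := by
    ext x
    simp only [ContinuousLinearMap.mul_apply]
    exact hRfix _ (Or.inl (proj_apply_mem Uᗮ x))
  have hRQ : (B * A) * Q = Q := by
    ext x
    simp only [ContinuousLinearMap.mul_apply]
    exact hRfix _ (Or.inr (proj_apply_mem Vᗮ x))
  have hPsa : star P = P := (proj_isSelfAdjoint Uᗮ).star_eq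
  have hQsa : star Q = Q := (proj_isSelfAdjoint Vᗮ).star_eq
  have hPR : P * (B * A) = P := by
    have := congrArg star hRP
    rwa [star_mul, hPsa, h4] at this
  have hQR : Q * (B * A) = Q := by
    have := congrArg star hRQ
    rwa [star_mul, hQsa, h4] at this
  have hcomm : A * B = B * A := by
    have : star (A * B) = B * A := by rw [star_mul, hBsa, hAsa]
    exact h3.symm.trans this
  have hQBP : Q * B * P = P - P * B * P := by
    calc Q * B * P = (A - P) * B * P := by rw [← hQeq]
      _ = A * B * P - P * B * P := by rw [sub_mul, sub_mul]
      _ = (B * A) * P - P * B * P := by rw [hcomm]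
      _ = P - P * B * P := by rw [hRP]
  have hPBQ : P * B * Q = P - P * B * P := by
    calc P * B * Q = P * B * (A - P) := by rw [← hQeq]
      _ = P * B * A - P * B * P := by rw [mul_sub]
      _ = P * (B * A) - P * B * P := by rw [mul_assoc]
      _ = P - P * B * P := by rw [hPR]
  have hsymm : P * B * Q = Q * B * P := by rw [hPBQ, hQBP]
  set t : X →L[ℝ] X := P * B * Q with htdef
  have hTsa : IsSelfAdjoint t := by
    show star t = t
    have : star t = Q * B * P := by
      rw [htdef, star_mul, star_mul, hBsa, hPsa, hQsa, ← mul_assoc]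
    rw [this, ← hsymm]
  -- range of t is contained in W
  have htW : ∀ x : X, t x ∈ W := by
    intro x
    constructor
    · show t x ∈ Uᗮ
      have : t x = P (B (Q x)) := by rw [htdef]; rfl
      rw [this]; exact proj_apply_mem Uᗮ _
    · show t x ∈ Vᗮ
      have : t x = Q (B (P x)) := by rw [hsymm]; rfl
      rw [this]; exact proj_apply_mem Vᗮ _
  -- t fixes W up to factor 1/2
  have hfixW : ∀ w ∈ W, t w = (1/2 : ℝ) • w := by
    intro w hw
    obtain ⟨hwU, hwV⟩ := hw
    have hQw : Q w = w := proj_apply_of_mem hwV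
    have hAw : A ((1/2 : ℝ) • w) = w := by
      have : A w = w + w := by
        rw [hA]
        simp only [ContinuousLinearMap.add_apply]
        rw [show P w = w from proj_apply_of_mem hwU, hQw]
      rw [map_smul, this, smul_add, ← add_smul]
      norm_num
    have hBw : B w = (1/2 : ℝ) • w := by
      conv_lhs => rw [← hAw]
      have : B (A ((1/2 : ℝ) • w)) = (B * A) ((1/2 : ℝ) • w) := rfl
      rw [this, map_smul, hRfix w (Or.inl hwU)]
    have ht' : t w = P (B (Q w)) := by rw [htdef]; rfl
    rw [ht', hQw, hBw, map_smul, proj_apply_of_mem hwU]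
  -- t kills the orthogonal complement of W
  have hkillW : ∀ y ∈ Wᗮ, t y = 0 := by
    intro y hy
    have hinner : ⟪t y, t y⟫ = 0 := by
      have e := ContinuousLinearMap.adjoint_inner_left t (t y) y
      rw [hTsa.adjoint_eq] at e
      rw [e]
      exact Submodule.inner_left_of_mem_orthogonal (htW (t y)) hy
    exact inner_self_eq_zero.mp hinner
  -- conclude t doubled is the projection onto W
  have hT : ((2:ℝ) • t : X →L[ℝ] X) = proj W := by
    ext x
    have hdecomp : proj W x + proj Wᗮ x = x := by
      rw [proj_coe, proj_coe]
      exact W.starProjection_add_starProjection_orthogonal x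
    have : t x = (1/2 : ℝ) • proj W x := by
      conv_lhs => rw [← hdecomp]
      rw [map_add, hfixW _ (proj_apply_mem W x), hkillW _ (proj_apply_mem Wᗮ x), add_zero]
    simp only [ContinuousLinearMap.smul_apply]
    rw [this, smul_smul]
    norm_num
  -- finish
  have hgoal1 : proj (U ⊔ V) = ContinuousLinearMap.id ℝ X - proj W := by
    rw [proj_congr (hWdef.trans (Submodule.inf_orthogonal U V)), ← id_sub_proj (U ⊔ V)]
    abel
  rw [hgoal1, id_sub_proj U, id_sub_proj V]
  congr 1
  rw [← hT, htdef, mul_assoc]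
  rfl
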